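/- arXiv:2212.05104 — 3 statements merged into one kernel-verified Lean document; each statement's English description precedes it below -/
import Mathlib

section
/- Let A, B be symmetric n×n real matrices with eigenvalues λ₁ ≤ ... ≤ λₙ and μ₁ ≤ ... ≤ μₙ respectively. Then tr(AB) ≤ Σᵢ λᵢμᵢ. -/
open Matrix Finset

private lemma sq_entries_doublyStochastic {n : ℕ} {W : Matrix (Fin n) (Fin n) ℝ}
    (hW : W ∈ Matrix.orthogonalGroup (Fin n) ℝ) :
    (Matrix.of fun i j => W i j ^ 2) ∈ doublyStochastic ℝ (Fin n) := by
  have h1 : W * Wᵀ = 1 := by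
    have := (mem_orthogonalGroup_iff (n := Fin n) (R := ℝ)).mp hW
    simpa using this
  have h2 : Wᵀ * W = 1 := by
    have := (mem_orthogonalGroup_iff' (n := Fin n) (R := ℝ)).mp hW
    simpa using this
  rw [mem_doublyStochastic_iff_sum]
  refine ⟨fun i j => by simp only [Matrix.of_apply]; positivity, fun i => ?_, fun j => ?_⟩
  · have := congrFun (congrFun h1 i) i
    simpa [Matrix.mul_apply, Matrix.one_apply, sq] using this
  · have := congrFun (congrFun h2 j) j
    simpa [Matrix.mul_apply, Matrix.one_apply, sq, mul_comm] using this

private lemma ds_bound {n : ℕ} (lam mu : Fin n → ℝ)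
    (hlam : Monotone lam) (hmu : Monotone mu)
    {D : Matrix (Fin n) (Fin n) ℝ} (hD : D ∈ doublyStochastic ℝ (Fin n)) :
    ∑ i, ∑ j, lam i * mu j * D i j ≤ ∑ i, lam i * mu i := by
  set f : Matrix (Fin n) (Fin n) ℝ → ℝ := fun M => ∑ i, ∑ j, lam i * mu j * M i j with hf
  have hlin : IsLinearMap ℝ f := by
    constructor
    · intro x y
      simp [hf, mul_add, Finset.sum_add_distrib]
    · intro c x
      simp [hf, Finset.mul_sum]
      congr 1; ext i; congr 1; ext j; ring
  have hperm : ∀ σ : Equiv.Perm (Fin n), f (σ.permMatrix ℝ) ≤ ∑ i, lam i * mu i := by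
    intro σ
    have : f (σ.permMatrix ℝ) = ∑ i, lam i * mu (σ i) := by
      simp [hf, Equiv.Perm.permMatrix, PEquiv.toMatrix_apply, Equiv.toPEquiv_apply,
        mul_ite, Finset.sum_ite_eq, eq_comm]
    rw [this]
    exact (hlam.monovary hmu).sum_mul_comp_perm_le_sum_mul
  have hconv : Convex ℝ {M : Matrix (Fin n) (Fin n) ℝ | f M ≤ ∑ i, lam i * mu i} :=
    convex_halfSpace_le hlin _
  have hsub : {σ.permMatrix ℝ | σ : Equiv.Perm (Fin n)} ⊆
      {M : Matrix (Fin n) (Fin n) ℝ | f M ≤ ∑ i, lam i * mu i} := by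
    rintro _ ⟨σ, rfl⟩; exact hperm σ
  have := convexHull_min hsub hconv
  have hD' : D ∈ convexHull ℝ {σ.permMatrix ℝ | σ : Equiv.Perm (Fin n)} := by
    rwa [← doublyStochastic_eq_convexHull_permMatrix]
  exact this hD'

theorem symmetric_von_neumann_trace_inequality {n : ℕ}
    (A B : Matrix (Fin n) (Fin n) ℝ) (lam mu : Fin n → ℝ)
    (hlam : Monotone lam) (hmu : Monotone mu)
    (hA : ∃ U ∈ Matrix.orthogonalGroup (Fin n) ℝ, A = U * Matrix.diagonal lam * Uᵀ)
    (hB : ∃ U ∈ Matrix.orthogonalGroup (Fin n) ℝ, B = U * Matrix.diagonal mu * Uᵀ) :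
    (A * B).trace ≤ ∑ i, lam i * mu i := by
  obtain ⟨U, hU, rfl⟩ := hA
  obtain ⟨V, hV, rfl⟩ := hB
  set W : Matrix (Fin n) (Fin n) ℝ := Uᵀ * V with hWdef
  have hW : W ∈ Matrix.orthogonalGroup (Fin n) ℝ := by
    have hU' : Uᵀ ∈ Matrix.orthogonalGroup (Fin n) ℝ := by
      rw [mem_orthogonalGroup_iff]
      have := (mem_orthogonalGroup_iff' (n := Fin n) (R := ℝ)).mp hU
      simpa using this
    exact mul_mem hU' hV
  have htr : (U * Matrix.diagonal lam * Uᵀ * (V * Matrix.diagonal mu * Vᵀ)).trace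
      = ∑ i, ∑ j, lam i * mu j * (W i j ^ 2) := by
    have h1 : U * Matrix.diagonal lam * Uᵀ * (V * Matrix.diagonal mu * Vᵀ)
        = (U * Matrix.diagonal lam * Uᵀ * V * Matrix.diagonal mu) * Vᵀ := by
      simp only [Matrix.mul_assoc]
    have h2 : Vᵀ * (U * Matrix.diagonal lam * Uᵀ * V * Matrix.diagonal mu)
        = Wᵀ * Matrix.diagonal lam * W * Matrix.diagonal mu := by
      rw [hWdef, Matrix.transpose_mul, Matrix.transpose_transpose]
      simp only [Matrix.mul_assoc]
    have h3 : ∀ j, (Wᵀ * Matrix.diagonal lam * W) j j = ∑ i, lam i * W i j ^ 2 := by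
      intro j
      rw [Matrix.mul_apply]
      simp only [Matrix.mul_diagonal, Matrix.transpose_apply]
      congr 1; ext i; ring
    rw [h1, Matrix.trace_mul_comm, h2]
    rw [Matrix.trace]
    simp only [Matrix.diag, Matrix.mul_diagonal, h3, Finset.sum_mul]
    rw [Finset.sum_comm]
    congr 1; ext i; congr 1; ext j; ring
  rw [htr]
  have := ds_bound lam mu hlam hmu (sq_entries_doublyStochastic hW)
  simpa using this
end

section
/- Let A be an invertible d×d real matrix such that the off-diagonal entries of AAᵀ are nonpositive and AAᵀ is irreducible (not permutation-similar to a block-diagonal matrix with more than one block). Then (AAᵀ)⁻¹ has all entries strictly positive. -/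
open Matrix

theorem inverse_of_irreducible_Z_gram_is_positive {d : ℕ}
    (A : Matrix (Fin d) (Fin d) ℝ) (hA : IsUnit A.det)
    (hoff : ∀ i j, i ≠ j → (A * Aᵀ) i j ≤ 0)
    (hirr : ∀ S : Set (Fin d), S.Nonempty → S ≠ Set.univ →
      ∃ i ∈ S, ∃ j ∈ Sᶜ, (A * Aᵀ) i j ≠ 0) :
    ∀ i j, 0 < (A * Aᵀ)⁻¹ i j := by
  set M := A * Aᵀ with hM
  have hdet : IsUnit M.det := by
    rw [hM, Matrix.det_mul, Matrix.det_transpose]; exact hA.mul hA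
  have hMinv : M * M⁻¹ = 1 := Matrix.mul_nonsing_inv M hdet
  -- positive definiteness
  have hpos : ∀ y : Fin d → ℝ, y ≠ 0 → 0 < y ⬝ᵥ (M *ᵥ y) := by
    intro y hy
    have hAT : IsUnit Aᵀ.det := by rwa [Matrix.det_transpose]
    have hz : Aᵀ *ᵥ y ≠ 0 := by
      intro h
      apply hy
      have := congrArg (fun v => (Aᵀ)⁻¹ *ᵥ v) h
      simpa [Matrix.mulVec_mulVec, Matrix.nonsing_inv_mul _ hAT] using this
    have heq : y ⬝ᵥ (M *ᵥ y) = (Aᵀ *ᵥ y) ⬝ᵥ (Aᵀ *ᵥ y) := by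
      rw [hM, ← Matrix.mulVec_mulVec, Matrix.dotProduct_mulVec y A,
        ← Matrix.mulVec_transpose]
    rw [heq]
    have hnn : 0 ≤ (Aᵀ *ᵥ y) ⬝ᵥ (Aᵀ *ᵥ y) :=
      Finset.sum_nonneg fun i _ => mul_self_nonneg _
    rcases hnn.lt_or_eq with h | h
    · exact h
    · exact absurd (dotProduct_self_eq_zero.mp h.symm) hz
  intro i j
  -- the j-th column of M⁻¹
  set x : Fin d → ℝ := fun k => M⁻¹ k j with hx
  have hMx : ∀ i, (M *ᵥ x) i = if i = j then 1 else 0 := by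
    intro i
    have : (M *ᵥ x) i = (M * M⁻¹) i j := by
      simp [Matrix.mulVec, dotProduct, Matrix.mul_apply, hx]
    rw [this, hMinv, Matrix.one_apply]
  -- nonnegativity of x
  set p : Fin d → ℝ := fun k => max (x k) 0 with hp
  set n : Fin d → ℝ := fun k => max (-x k) 0 with hn
  have hpnn : ∀ k, 0 ≤ p k := fun k => le_max_right _ _
  have hnnn : ∀ k, 0 ≤ n k := fun k => le_max_right _ _
  have hpn0 : ∀ k, p k * n k = 0 := by
    intro k
    rcases le_total (x k) 0 with h | h
    · simp [hp, max_eq_right h]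
    · simp [hn, max_eq_right (neg_nonpos_of_nonneg h)]
  have hxpn : x = p - n := by
    funext k
    rcases le_total (x k) 0 with h | h
    · simp [hp, hn, max_eq_right h, max_eq_left (neg_nonneg_of_nonpos h)]
    · simp [hp, hn, max_eq_left h, max_eq_right (neg_nonpos_of_nonneg h)]
  have hnzero : n = 0 := by
    by_contra hne
    have h1 : n ⬝ᵥ (M *ᵥ n) = n ⬝ᵥ (M *ᵥ p) - n ⬝ᵥ (M *ᵥ x) := by
      have : (p : Fin d → ℝ) - x = n := by rw [hxpn]; abel
      rw [← this, Matrix.mulVec_sub, dotProduct_sub]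
    have h2 : n ⬝ᵥ (M *ᵥ p) ≤ 0 := by
      simp only [dotProduct, Matrix.mulVec]
      apply Finset.sum_nonpos
      intro i _
      rw [Finset.mul_sum]
      apply Finset.sum_nonpos
      intro k _
      by_cases hik : i = k
      · subst hik
        have heq : n i * (M i i * p i) = M i i * (p i * n i) := by ring
        rw [heq, hpn0 i, mul_zero]
      · have h := mul_nonpos_of_nonpos_of_nonneg (hoff i k hik)
          (mul_nonneg (hnnn i) (hpnn k))
        have heq : n i * (M i k * p k) = M i k * (n i * p k) := by ring
        rw [heq]; exact h
    have h3 : 0 ≤ n ⬝ᵥ (M *ᵥ x) := by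
      rw [dotProduct]
      have : ∀ i ∈ Finset.univ, n i * (M *ᵥ x) i = if i = j then n j else 0 := by
        intro i _
        rw [hMx i]
        by_cases h : i = j <;> simp [h]
      rw [Finset.sum_congr rfl this, Finset.sum_ite_eq' Finset.univ j]
      simp [hnnn j]
    have h4 : n ⬝ᵥ (M *ᵥ n) ≤ 0 := by rw [h1]; linarith
    exact absurd h4 (not_le.mpr (hpos n hne))
  have hxnn : ∀ k, 0 ≤ x k := by
    intro k
    have : n k = 0 := by rw [hnzero]; rfl
    have : max (-x k) 0 = 0 := this
    nlinarith [le_max_left (-x k) 0, (le_of_eq this.symm : (0:ℝ) ≤ max (-x k) 0), le_max_left (-x k) (0:ℝ)]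
  -- x j > 0
  have hxne : x ≠ 0 := by
    intro h
    have := hMx j
    rw [h] at this
    simp at this
  have hxj : 0 < x j := by
    have hQ : x ⬝ᵥ (M *ᵥ x) = x j := by
      rw [dotProduct]
      have : ∀ i ∈ Finset.univ, x i * (M *ᵥ x) i = if i = j then x j else 0 := by
        intro i _
        rw [hMx i]
        by_cases h : i = j <;> simp [h]
      rw [Finset.sum_congr rfl this, Finset.sum_ite_eq' Finset.univ j]
      simp
    have := hpos x hxne
    rw [hQ] at this
    exact this
  -- strict positivity via irreducibility
  have hxpos : ∀ k, x k ≠ 0 := by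
    intro k₀ hk₀
    set S : Set (Fin d) := {k | x k = 0} with hS
    have hSne : S.Nonempty := ⟨k₀, hk₀⟩
    have hSnu : S ≠ Set.univ := by
      intro h
      have : j ∈ S := h ▸ Set.mem_univ j
      exact absurd this (by simp [hS]; linarith)
    obtain ⟨a, haS, b, hbS, hMab⟩ := hirr S hSne hSnu
    have haj : a ≠ j := by
      intro h
      rw [hS] at haS
      rw [h] at haS
      exact absurd haS (by simp; linarith)
    have hMxa : (M *ᵥ x) a = 0 := by rw [hMx a]; simp [haj]
    simp only [Matrix.mulVec, dotProduct] at hMxa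
    have hterm : ∀ k ∈ Finset.univ, M a k * x k ≤ 0 := by
      intro k _
      by_cases hak : a = k
      · subst hak
        have : x a = 0 := haS
        rw [this]; simp
      · exact mul_nonpos_of_nonpos_of_nonneg (hoff a k hak) (hxnn k)
    have hall := (Finset.sum_eq_zero_iff_of_nonpos hterm).mp hMxa
    have hMab0 := hall b (Finset.mem_univ b)
    have hxb : x b ≠ 0 := hbS
    have : M a b = 0 := by
      rcases mul_eq_zero.mp hMab0 with h | h
      · exact h
      · exact absurd h hxb
    exact hMab this
  exact lt_of_le_of_ne (hxnn i) (Ne.symm (hxpos i))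
end

section
/- Let M be a d×d real symmetric matrix whose eigenvalues satisfy λ_{d-k+1}(M) = -λ_k(M) for all k (spectrum symmetric about 0), and assume each principal (d-1)×(d-1) submatrix M^{(j)} also has spectrum symmetric about 0. If the top and bottom eigenvalues of M are simple, then the corresponding unit eigenvectors v₁ and v_d satisfy (v₁)ⱼ² = (v_d)ⱼ² for every j ∈ [d]. -/
open Matrix Polynomial Finset

set_option linter.unusedSectionVars false
set_option linter.unusedVariables false

variable {n : Type*} [Fintype n] [DecidableEq n]


lemma my_eval_charpoly (A : Matrix n n ℝ) (x : ℝ) :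
    A.charpoly.eval x = det (x • (1 : Matrix n n ℝ) - A) := by
  rw [Matrix.charpoly, ← Polynomial.coe_evalRingHom, RingHom.map_det]
  congr 1
  ext i j
  by_cases h : i = j
  · subst h; simp [charmatrix_apply_eq, Matrix.one_apply]
  · simp [charmatrix_apply_ne _ _ _ h, Matrix.one_apply_ne h]

lemma my_charpoly_conj (P A Q : Matrix n n ℝ) (hPQ : P * Q = 1) :
    (P * A * Q).charpoly = A.charpoly := by
  have hc : charmatrix (P * A * Q) = P.map C * charmatrix A * Q.map C := by
    simp only [charmatrix, RingHom.mapMatrix_apply]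
    rw [Matrix.mul_sub, Matrix.sub_mul]
    congr 1
    · have h1 : P.map C * Matrix.scalar n (X : ℝ[X]) = Matrix.scalar n (X : ℝ[X]) * P.map C :=
        (scalar_commute (X : ℝ[X]) (fun r => Commute.all _ _) _).symm
      rw [h1, Matrix.mul_assoc, ← Matrix.map_mul, hPQ, Matrix.map_one _ (map_zero C) (map_one C),
        Matrix.mul_one]
    · rw [← Matrix.map_mul, ← Matrix.map_mul]
  have hQP : Q * P = 1 := mul_eq_one_comm.mp hPQ
  rw [Matrix.charpoly, hc, det_mul, det_mul, mul_comm, ← mul_assoc, ← det_mul, ← Matrix.map_mul,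
    hQP, Matrix.map_one _ (map_zero C) (map_one C), det_one, one_mul, Matrix.charpoly]

lemma my_charpoly_diagonal (f : n → ℝ) :
    (Matrix.diagonal f).charpoly = ∏ i, (X - C (f i)) := by
  rw [Matrix.charpoly]
  have : charmatrix (Matrix.diagonal f) = Matrix.diagonal (fun i => X - C (f i)) := by
    ext i j
    by_cases h : i = j
    · subst h; simp
    · simp [charmatrix_apply_ne _ _ _ h, Matrix.diagonal_apply_ne _ h]
  rw [this, det_diagonal]

lemma my_hermitian_charpoly (A : Matrix n n ℝ) (hA : A.IsHermitian) :
    A.charpoly = ∏ i, (X - C (hA.eigenvalues i)) := by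
  have hs := hA.spectral_theorem
  simp only [RCLike.ofReal_real_eq_id, Function.comp_id, Function.id_comp] at hs
  have hU : (hA.eigenvectorUnitary : Matrix n n ℝ) * star (hA.eigenvectorUnitary : Matrix n n ℝ)
      = 1 := Matrix.mem_unitaryGroup_iff.mp hA.eigenvectorUnitary.2
  calc A.charpoly = ((hA.eigenvectorUnitary : Matrix n n ℝ) * diagonal hA.eigenvalues *
        star (hA.eigenvectorUnitary : Matrix n n ℝ)).charpoly := by
          conv_lhs => rw [hs, Unitary.conjStarAlgAut_apply]
    _ = (diagonal hA.eigenvalues).charpoly := my_charpoly_conj _ _ _ hU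
    _ = _ := my_charpoly_diagonal _

lemma my_hermitian_roots (A : Matrix n n ℝ) (hA : A.IsHermitian) :
    A.charpoly.roots = Finset.univ.val.map hA.eigenvalues := by
  rw [my_hermitian_charpoly A hA,
    ← Polynomial.roots_multiset_prod_X_sub_C (Finset.univ.val.map hA.eigenvalues)]
  congr 1
  rw [Multiset.map_map, Finset.prod_eq_multiset_prod]
  rfl

lemma my_eval_prod (f : n → ℝ) (x : ℝ) :
    (∏ i, (X - C (f i))).eval x = ∏ i, (x - f i) := by
  simp [eval_prod]

lemma my_eig_entries (A : Matrix n n ℝ) (hA : A.IsHermitian) (x : ℝ) (i0 : n) (v : n → ℝ)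
    (hx : hA.eigenvalues i0 = x) (huniq : ∀ k, k ≠ i0 → hA.eigenvalues k ≠ x)
    (hv : A.mulVec v = x • v) (hn : ∑ j, v j ^ 2 = 1) :
    ∀ j, v j ^ 2 = ((hA.eigenvectorUnitary : Matrix n n ℝ) j i0) ^ 2 := by
  set U := (hA.eigenvectorUnitary : Matrix n n ℝ) with hUdef
  have hU1 : U * star U = 1 := Matrix.mem_unitaryGroup_iff.mp hA.eigenvectorUnitary.2
  have hU2 : star U * U = 1 := Matrix.mem_unitaryGroup_iff'.mp hA.eigenvectorUnitary.2
  have hD : star U * A * U = diagonal hA.eigenvalues := by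
    have := hA.conjStarAlgAut_star_eigenvectorUnitary
    simpa [RCLike.ofReal_real_eq_id, Unitary.conjStarAlgAut_star_apply] using this
  set y := star U *ᵥ v with hydef
  have hy : diagonal hA.eigenvalues *ᵥ y = x • y := by
    rw [hydef, mulVec_mulVec, ← hD, Matrix.mul_assoc, hU1, Matrix.mul_one, ← mulVec_mulVec, hv,
      mulVec_smul]
  have hyk : ∀ k, k ≠ i0 → y k = 0 := by
    intro k hk
    have hk2 := congrFun hy k
    simp only [mulVec_diagonal, Pi.smul_apply, smul_eq_mul] at hk2
    have := sub_ne_zero.mpr (huniq k hk)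
    have h3 : (hA.eigenvalues k - x) * y k = 0 := by ring_nf; linarith [hk2]
    rcases mul_eq_zero.mp h3 with h | h
    · exact absurd h this
    · exact h
  have hvy : ∀ j, v j = U j i0 * y i0 := by
    intro j
    have : v = U *ᵥ y := by rw [hydef, mulVec_mulVec, hU1, one_mulVec]
    rw [this, mulVec]
    rw [show (U j ⬝ᵥ y) = ∑ k, U j k * y k from rfl]
    rw [Finset.sum_eq_single i0]
    · intro k _ hk; rw [hyk k hk, mul_zero]
    · intro h; exact absurd (mem_univ i0) h
  have hcol : ∑ j, (U j i0) ^ 2 = 1 := by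
    have := congrFun (congrFun hU2 i0) i0
    simp only [Matrix.mul_apply, Matrix.one_apply_eq, Matrix.star_apply, star_trivial] at this
    rw [← this]
    exact Finset.sum_congr rfl fun j _ => by ring
  have hy2 : y i0 ^ 2 = 1 := by
    have : ∑ j, v j ^ 2 = y i0 ^ 2 * ∑ j, (U j i0) ^ 2 := by
      rw [Finset.mul_sum]
      exact Finset.sum_congr rfl fun j _ => by rw [hvy j]; ring
    rw [hcol, mul_one] at this
    rw [← this, hn]
  intro j
  rw [hvy j, mul_pow, hy2, mul_one]

lemma my_adj_diag (A : Matrix n n ℝ) (hA : A.IsHermitian) (x : ℝ) (i0 : n)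
    (hx : hA.eigenvalues i0 = x) :
    ∀ j, adjugate (x • (1 : Matrix n n ℝ) - A) j j =
      (∏ k ∈ univ.erase i0, (x - hA.eigenvalues k)) *
        ((hA.eigenvectorUnitary : Matrix n n ℝ) j i0) ^ 2 := by
  set U := (hA.eigenvectorUnitary : Matrix n n ℝ) with hUdef
  have hU1 : U * star U = 1 := Matrix.mem_unitaryGroup_iff.mp hA.eigenvectorUnitary.2
  have hU2 : star U * U = 1 := Matrix.mem_unitaryGroup_iff'.mp hA.eigenvectorUnitary.2
  have hs : A = U * diagonal hA.eigenvalues * star U := by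
    have := hA.spectral_theorem
    simpa [RCLike.ofReal_real_eq_id] using this
  have hdet : det U * det U = 1 := by
    have := congrArg det hU1
    rwa [det_mul, det_one, Matrix.star_eq_conjTranspose, conjTranspose_eq_transpose_of_trivial,
      det_transpose] at this
  have adjU : adjugate U = det U • star U := by
    calc adjugate U = (star U * U) * adjugate U := by rw [hU2, Matrix.one_mul]
      _ = star U * (U * adjugate U) := by rw [Matrix.mul_assoc]
      _ = star U * (det U • 1) := by rw [mul_adjugate]
      _ = det U • star U := by rw [Matrix.mul_smul, Matrix.mul_one]
  have adjsU : adjugate (star U) = det U • U := by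
    have hdets : det (star U) = det U := by
      rw [Matrix.star_eq_conjTranspose, conjTranspose_eq_transpose_of_trivial, det_transpose]
    calc adjugate (star U) = (U * star U) * adjugate (star U) := by rw [hU1, Matrix.one_mul]
      _ = U * (star U * adjugate (star U)) := by rw [Matrix.mul_assoc]
      _ = U * (det (star U) • 1) := by rw [mul_adjugate]
      _ = det U • U := by rw [hdets, Matrix.mul_smul, Matrix.mul_one]
  have hconj : x • (1 : Matrix n n ℝ) - A
      = U * diagonal (fun k => x - hA.eigenvalues k) * star U := by
    have hdd : diagonal (fun k => x - hA.eigenvalues k)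
        = x • (1 : Matrix n n ℝ) - diagonal hA.eigenvalues := by
      ext i j
      by_cases h : i = j
      · subst h; simp [Matrix.one_apply]
      · simp [Matrix.diagonal_apply_ne _ h, Matrix.one_apply_ne h]
    rw [hdd, Matrix.mul_sub, Matrix.sub_mul, ← hs]
    congr 1
    rw [Matrix.mul_smul, Matrix.mul_one, Matrix.smul_mul, hU1]
  have hadj : adjugate (x • (1 : Matrix n n ℝ) - A)
      = U * adjugate (diagonal (fun k => x - hA.eigenvalues k)) * star U := by
    rw [hconj, adjugate_mul_distrib, adjugate_mul_distrib, adjsU, adjU]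
    simp only [Matrix.smul_mul, Matrix.mul_smul, smul_smul]
    rw [hdet, one_smul, Matrix.mul_assoc]
  intro j
  rw [hadj, adjugate_diagonal]
  have hg : ∀ k, k ≠ i0 → (∏ l ∈ univ.erase k, (x - hA.eigenvalues l)) = 0 := by
    intro k hk
    apply Finset.prod_eq_zero (Finset.mem_erase.mpr ⟨Ne.symm hk, mem_univ i0⟩)
    rw [hx, sub_self]
  rw [Matrix.mul_apply]
  rw [Finset.sum_eq_single i0]
  · rw [Matrix.mul_apply, Finset.sum_eq_single i0]
    · rw [Matrix.diagonal_apply_eq, Matrix.star_apply, star_trivial]; ring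
    · intro k _ hk
      rw [Matrix.diagonal_apply_ne _ hk, mul_zero]
    · intro h; exact absurd (mem_univ i0) h
  · intro k _ hk
    rw [Matrix.mul_apply, Finset.sum_eq_single k]
    · rw [Matrix.diagonal_apply_eq, hg k hk, mul_zero, zero_mul]
    · intro l _ hl; rw [Matrix.diagonal_apply_ne _ hl, mul_zero]
    · intro h; exact absurd (mem_univ k) h
  · intro h; exact absurd (mem_univ i0) h

theorem eigenvector_entries_of_symmetric_spectrum {d : ℕ}
    (M : Matrix (Fin (d + 1)) (Fin (d + 1)) ℝ) (hM : M.IsSymm)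
    (hspec : M.charpoly.roots.map (fun x => -x) = M.charpoly.roots)
    (hsub : ∀ j : Fin (d + 1),
      ((M.submatrix j.succAbove j.succAbove).charpoly.roots).map (fun x => -x) =
        (M.submatrix j.succAbove j.succAbove).charpoly.roots)
    (a b : ℝ)
    (ha : a ∈ M.charpoly.roots ∧ (∀ r ∈ M.charpoly.roots, r ≤ a) ∧
      M.charpoly.roots.count a = 1)
    (hb : b ∈ M.charpoly.roots ∧ (∀ r ∈ M.charpoly.roots, b ≤ r) ∧
      M.charpoly.roots.count b = 1)
    (v w : Fin (d + 1) → ℝ)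
    (hv : M.mulVec v = a • v) (hw : M.mulVec w = b • w)
    (hvn : (∑ j, v j ^ 2) = 1) (hwn : (∑ j, w j ^ 2) = 1) :
    ∀ j, v j ^ 2 = w j ^ 2 := by
  classical
  have hH : M.IsHermitian := by
    rw [Matrix.IsHermitian, conjTranspose_eq_transpose_of_trivial]; exact hM
  set μ := hH.eigenvalues with hμdef
  set U := (hH.eigenvectorUnitary : Matrix (Fin (d+1)) (Fin (d+1)) ℝ) with hUdef
  have hroots : M.charpoly.roots = Finset.univ.val.map μ := my_hermitian_roots M hH
  -- indices achieving a and b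
  obtain ⟨i0, -, hi0⟩ := Multiset.mem_map.mp (hroots ▸ ha.1)
  obtain ⟨i1, -, hi1⟩ := Multiset.mem_map.mp (hroots ▸ hb.1)
  -- uniqueness of those indices
  have huniq : ∀ (x : ℝ) (i : Fin (d+1)), μ i = x → M.charpoly.roots.count x = 1 →
      ∀ k, k ≠ i → μ k ≠ x := by
    intro x i hix hcount k hk hkx
    rw [hroots] at hcount
    have h1 : i ∈ (univ.val : Multiset (Fin (d+1))) := Finset.mem_val.mpr (mem_univ i)
    have e1 : (univ.val : Multiset (Fin (d+1))) = i ::ₘ univ.val.erase i :=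
      (Multiset.cons_erase h1).symm
    have h2 : k ∈ univ.val.erase i :=
      (Multiset.mem_erase_of_ne hk).mpr (Finset.mem_val.mpr (mem_univ k))
    have e2 : univ.val.erase i = k ::ₘ (univ.val.erase i).erase k :=
      (Multiset.cons_erase h2).symm
    rw [e1, e2, Multiset.map_cons, Multiset.map_cons, hix, hkx,
      Multiset.count_cons_self, Multiset.count_cons_self] at hcount
    omega
  have huniqa : ∀ k, k ≠ i0 → μ k ≠ a := huniq a i0 hi0 ha.2.2
  have huniqb : ∀ k, k ≠ i1 → μ k ≠ b := huniq b i1 hi1 hb.2.2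
  -- b = -a
  have hmemneg : ∀ r ∈ M.charpoly.roots, -r ∈ M.charpoly.roots := by
    intro r hr
    rw [← hspec]; exact Multiset.mem_map_of_mem _ hr
  have hba : b = -a := le_antisymm (hb.2.1 _ (hmemneg a ha.1))
    (by have := ha.2.1 _ (hmemneg b hb.1); linarith)
  -- eigenvector entries in terms of U
  have hva : ∀ j, v j ^ 2 = (U j i0) ^ 2 := my_eig_entries M hH a i0 v hi0 huniqa hv hvn
  have hwb : ∀ j, w j ^ 2 = (U j i1) ^ 2 := my_eig_entries M hH b i1 w hi1 huniqb hw hwn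
  -- the products
  set ca := ∏ k ∈ univ.erase i0, (a - μ k) with hcadef
  set cb := ∏ k ∈ univ.erase i1, (b - μ k) with hcbdef
  have hca0 : ca ≠ 0 := Finset.prod_ne_zero_iff.mpr
    (fun k hk => sub_ne_zero.mpr (Ne.symm (huniqa k (Finset.mem_erase.mp hk).1)))
  -- erase descriptions
  have herase : ∀ (i : Fin (d+1)) (x : ℝ), μ i = x →
      M.charpoly.roots.erase x = (univ.erase i).val.map μ := by
    intro i x hix
    have h1 : i ∈ (univ.val : Multiset (Fin (d+1))) := Finset.mem_val.mpr (mem_univ i)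
    rw [hroots, Finset.erase_val]
    calc (univ.val.map μ).erase x = ((i ::ₘ univ.val.erase i).map μ).erase x := by
          rw [Multiset.cons_erase h1]
      _ = (x ::ₘ (univ.val.erase i).map μ).erase x := by rw [Multiset.map_cons, hix]
      _ = (univ.val.erase i).map μ := Multiset.erase_cons_head _ _
  -- products as multiset products over roots
  have hcam : ca = ((M.charpoly.roots.erase a).map (fun r => a - r)).prod := by
    rw [herase i0 a hi0, Multiset.map_map, hcadef, Finset.prod_eq_multiset_prod]
    rfl
  have hcbm : cb = ((M.charpoly.roots.erase b).map (fun r => b - r)).prod := by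
    rw [herase i1 b hi1, Multiset.map_map, hcbdef, Finset.prod_eq_multiset_prod]
    rfl
  -- cardinality of erased roots
  have hcard : Multiset.card (M.charpoly.roots.erase a) = d := by
    rw [Multiset.card_erase_of_mem ha.1, hroots, Multiset.card_map]
    simp
  -- relation between erased root multisets
  have hneg_erase : (M.charpoly.roots.erase a).map (fun x : ℝ => -x) = M.charpoly.roots.erase b := by
    rw [Multiset.map_erase _ neg_injective, hspec, hba]
  -- cb = (-1)^d * ca
  have hcb_ca : cb = (-1 : ℝ) ^ d * ca := by
    rw [hcbm, ← hneg_erase, Multiset.map_map]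
    have : ((fun r : ℝ => b - r) ∘ fun x : ℝ => -x) = (Neg.neg ∘ fun r : ℝ => a - r) := by
      funext r; simp [hba]; ring
    rw [this, ← Multiset.map_map, Multiset.prod_map_neg, Multiset.card_map, hcard, hcam]
  -- per-entry identity
  have key : ∀ j : Fin (d+1), cb * (U j i1) ^ 2 = (-1 : ℝ) ^ d * (ca * (U j i0) ^ 2) := by
    intro j
    set N := M.submatrix j.succAbove j.succAbove with hNdef
    have hN : N.IsHermitian := by
      rw [Matrix.IsHermitian, conjTranspose_eq_transpose_of_trivial]
      ext k l
      simp only [transpose_apply, hNdef, submatrix_apply]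
      exact congrFun (congrFun hM (j.succAbove k)) (j.succAbove l)
    have hNroots : N.charpoly.roots = Finset.univ.val.map hN.eigenvalues :=
      my_hermitian_roots N hN
    have hNcard : Multiset.card N.charpoly.roots = d := by
      rw [hNroots, Multiset.card_map]; simp
    -- evals as multiset products
    have hevalN : ∀ x : ℝ, N.charpoly.eval x = (N.charpoly.roots.map (fun r => x - r)).prod := by
      intro x
      rw [hNroots, Multiset.map_map, my_hermitian_charpoly N hN, my_eval_prod,
        Finset.prod_eq_multiset_prod]
      rfl
    -- eval b = (-1)^d eval a
    have hevba : N.charpoly.eval b = (-1 : ℝ) ^ d * N.charpoly.eval a := by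
      have hcomp : ((fun r : ℝ => b - r) ∘ fun x : ℝ => -x) = (Neg.neg ∘ fun r : ℝ => a - r) := by
        funext r; simp [hba]; ring
      have e : (N.charpoly.roots.map (fun r => b - r)).prod
          = ((N.charpoly.roots.map (fun r => a - r)).map Neg.neg).prod := by
        conv_lhs => rw [← hsub j]
        rw [Multiset.map_map, Multiset.map_map, hcomp]
      rw [hevalN b, hevalN a, e, Multiset.prod_map_neg, Multiset.card_map, hNcard]
    -- adjugate bridge
    have hbridge : ∀ x : ℝ, N.charpoly.eval x = adjugate (x • (1 : Matrix (Fin (d+1)) (Fin (d+1)) ℝ) - M) j j := by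
      intro x
      have hsubm : (x • (1 : Matrix (Fin (d+1)) (Fin (d+1)) ℝ) - M).submatrix j.succAbove j.succAbove
          = x • (1 : Matrix (Fin d) (Fin d) ℝ) - N := by
        ext k l
        by_cases h : k = l
        · subst h; simp [hNdef]
        · simp [hNdef, Matrix.one_apply_ne h,
            Matrix.one_apply_ne (fun hc => h (Fin.succAbove_right_injective hc))]
      rw [my_eval_charpoly, adjugate_fin_succ_eq_det_submatrix, hsubm]
      have : ((-1 : ℝ)) ^ ((j : ℕ) + (j : ℕ)) = 1 := Even.neg_one_pow ⟨(j : ℕ), rfl⟩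
      rw [this, one_mul]
    have hAa := my_adj_diag M hH a i0 hi0 j
    have hAb := my_adj_diag M hH b i1 hi1 j
    calc cb * (U j i1) ^ 2 = adjugate (b • (1 : Matrix (Fin (d+1)) (Fin (d+1)) ℝ) - M) j j := by
          rw [hAb]
      _ = N.charpoly.eval b := (hbridge b).symm
      _ = (-1 : ℝ) ^ d * N.charpoly.eval a := hevba
      _ = (-1 : ℝ) ^ d * (ca * (U j i0) ^ 2) := by rw [hbridge a, hAa]
  -- conclude
  intro j
  have hk := key j
  rw [hcb_ca] at hk
  have hne : (-1 : ℝ) ^ d * ca ≠ 0 := mul_ne_zero (pow_ne_zero _ (by norm_num)) hca0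
  have : (U j i1) ^ 2 = (U j i0) ^ 2 := by
    have h1 : (-1 : ℝ) ^ d * ca * (U j i1) ^ 2 = (-1 : ℝ) ^ d * ca * (U j i0) ^ 2 := by
      rw [hk]; ring
    exact mul_left_cancel₀ hne h1
  rw [hva j, hwb j, this]
end
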